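/- Fix natural numbers u and v, and define the multiplication-carry sequence C : ℕ → ℕ by C 0 = Bitsum(0, 0, u, v) / 2 and C (y+1) = (Bitsum(y+1, y+1, u, v) + C y) / 2 (integer division). Then: Nat.testBit (u·v) 0 = decide (Bitsum(0, 0, u, v) % 2 = 1), and for every y, Nat.testBit (u·v) (y+1) = decide ((Bitsum(y+1, y+1, u, v) + C y) % 2 = 1). -/

import Mathlib

/-- The `y`-th least significant binary digit of `x`, as a natural number. -/
def bitOf (x y : ℕ) : ℕ := x / 2 ^ y % 2

/-- `Bitsum x y u v = Σ_{i=0}^{min(x,y)} (u)_i · (v)_{y−i}`. -/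
def Bitsum (x y u v : ℕ) : ℕ :=
  ∑ i ∈ Finset.range (min x y + 1), bitOf u i * bitOf v (y - i)

lemma mod_two_pow_succ' (x n : ℕ) :
    x % 2 ^ (n + 1) = x % 2 ^ n + bitOf x n * 2 ^ n := by
  have h1 := Nat.div_add_mod x (2 ^ n)
  have h2 := Nat.div_add_mod (x / 2 ^ n) 2
  have hr : x % 2 ^ n < 2 ^ n := Nat.mod_lt _ (Nat.pow_pos (by norm_num))
  have hb : x / 2 ^ n % 2 < 2 := Nat.mod_lt _ (by norm_num)
  have h3 : 2 ^ n * (x / 2 ^ n) = 2 ^ n * 2 * (x / 2 ^ n / 2) + x / 2 ^ n % 2 * 2 ^ n := by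
    conv_lhs => rw [← h2]
    ring
  have hx : x = 2 ^ (n + 1) * (x / 2 ^ n / 2) + (x % 2 ^ n + bitOf x n * 2 ^ n) := by
    unfold bitOf
    rw [pow_succ]
    linarith [h1, h3]
  calc x % 2 ^ (n + 1)
      = (2 ^ (n + 1) * (x / 2 ^ n / 2) + (x % 2 ^ n + bitOf x n * 2 ^ n)) % 2 ^ (n + 1) := by
        rw [← hx]
    _ = (x % 2 ^ n + bitOf x n * 2 ^ n) % 2 ^ (n + 1) := by rw [Nat.mul_add_mod]
    _ = x % 2 ^ n + bitOf x n * 2 ^ n := by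
        apply Nat.mod_eq_of_lt
        have hble : bitOf x n ≤ 1 := by unfold bitOf; omega
        calc x % 2 ^ n + bitOf x n * 2 ^ n < 2 ^ n + 1 * 2 ^ n := by
              exact Nat.add_lt_add_of_lt_of_le hr (Nat.mul_le_mul_right _ hble)
          _ = 2 ^ (n + 1) := by ring

lemma mod_two_pow_eq_sum_bits (x n : ℕ) :
    x % 2 ^ n = ∑ i ∈ Finset.range n, bitOf x i * 2 ^ i := by
  induction n with
  | zero => simp [Nat.mod_one]
  | succ n ih => rw [Finset.sum_range_succ, ← ih, mod_two_pow_succ']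

lemma prod_mod (u v n : ℕ) :
    u * v % 2 ^ n = (∑ k ∈ Finset.range n, Bitsum k k u v * 2 ^ k) % 2 ^ n := by
  conv_lhs => rw [Nat.mul_mod, mod_two_pow_eq_sum_bits u n, mod_two_pow_eq_sum_bits v n]
  rw [Finset.sum_mul_sum]
  have hterm : ∀ i j, (bitOf u i * 2 ^ i) * (bitOf v j * 2 ^ j)
      = bitOf u i * bitOf v j * 2 ^ (i + j) := by
    intro i j; ring
  simp only [hterm]
  rw [← Finset.sum_product']
  rw [← Finset.sum_filter_add_sum_filter_not (Finset.range n ×ˢ Finset.range n)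
    (fun p => p.1 + p.2 < n)]
  have hdvd : 2 ^ n ∣ ∑ p ∈ (Finset.range n ×ˢ Finset.range n).filter
      (fun p => ¬ p.1 + p.2 < n), bitOf u p.1 * bitOf v p.2 * 2 ^ (p.1 + p.2) := by
    apply Finset.dvd_sum
    intro p hp
    simp only [Finset.mem_filter] at hp
    exact Dvd.dvd.mul_left (pow_dvd_pow 2 (by omega)) _
  obtain ⟨c, hc⟩ := hdvd
  rw [hc, Nat.add_mul_mod_self_left]
  congr 1
  have htri : (∑ k ∈ Finset.range n, Bitsum k k u v * 2 ^ k)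
      = ∑ k ∈ Finset.range n, ∑ i ∈ Finset.range (k + 1),
          bitOf u i * bitOf v (k - i) * 2 ^ k := by
    apply Finset.sum_congr rfl
    intro k _
    simp only [Bitsum, min_self, Finset.sum_mul]
  rw [htri, Finset.sum_sigma']
  symm
  apply Finset.sum_nbij' (fun (p : Σ _ : ℕ, ℕ) => (p.2, p.1 - p.2))
    (fun (p : ℕ × ℕ) => (⟨p.1 + p.2, p.1⟩ : Σ _ : ℕ, ℕ))
  · intro p hp
    simp only [Finset.mem_sigma, Finset.mem_range] at hp
    simp only [Finset.mem_filter, Finset.mem_product, Finset.mem_range]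
    omega
  · intro p hp
    simp only [Finset.mem_filter, Finset.mem_product, Finset.mem_range] at hp
    simp only [Finset.mem_sigma, Finset.mem_range]
    omega
  · intro p hp
    simp only [Finset.mem_sigma, Finset.mem_range] at hp
    obtain ⟨k, i⟩ := p
    simp only at hp ⊢
    have he : i + (k - i) = k := by omega
    rw [he]
  · intro p hp
    simp only [Finset.mem_filter, Finset.mem_product, Finset.mem_range] at hp
    obtain ⟨i, j⟩ := p
    dsimp only
    have he : i + j - i = j := by omega
    rw [he]
  · intro p hp
    simp only [Finset.mem_sigma, Finset.mem_range] at hp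
    obtain ⟨k, i⟩ := p
    simp only at hp ⊢
    have he : i + (k - i) = k := by omega
    rw [he]

theorem stmt_10 (u v : ℕ) (C : ℕ → ℕ)
    (hC0 : C 0 = Bitsum 0 0 u v / 2)
    (hCs : ∀ y, C (y + 1) = (Bitsum (y + 1) (y + 1) u v + C y) / 2) :
    Nat.testBit (u * v) 0 = decide (Bitsum 0 0 u v % 2 = 1) ∧
    ∀ y, Nat.testBit (u * v) (y + 1) =
      decide ((Bitsum (y + 1) (y + 1) u v + C y) % 2 = 1) := by
  have h01 : u * v % 2 = Bitsum 0 0 u v % 2 := by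
    have h := prod_mod u v 1
    simpa using h
  -- Invariant: partial column sums equal truncated product plus carry.
  have hinv : ∀ y, (∑ k ∈ Finset.range (y + 1), Bitsum k k u v * 2 ^ k)
      = u * v % 2 ^ (y + 1) + C y * 2 ^ (y + 1) ∧
      (y = 0 ∨ ∀ z, y = z + 1 →
        u * v / 2 ^ (z + 1) % 2 = (Bitsum (z + 1) (z + 1) u v + C z) % 2) := by
    intro y
    induction y with
    | zero =>
      constructor
      · have hs : (∑ k ∈ Finset.range (0 + 1), Bitsum k k u v * 2 ^ k)
            = Bitsum 0 0 u v := by simp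
        rw [hs, hC0]
        norm_num
        omega
      · left; rfl
    | succ y ih =>
      obtain ⟨ih1, _⟩ := ih
      have hPpos : (0:ℕ) < 2 ^ (y + 1) := Nat.pow_pos (by norm_num)
      have hrlt : u * v % 2 ^ (y + 1) < 2 ^ (y + 1) := Nat.mod_lt _ hPpos
      have hS2 : (∑ k ∈ Finset.range (y + 2), Bitsum k k u v * 2 ^ k)
          = u * v % 2 ^ (y + 1)
            + (Bitsum (y + 1) (y + 1) u v + C y) * 2 ^ (y + 1) := by
        rw [Finset.sum_range_succ, ih1]
        ring
      set m := Bitsum (y + 1) (y + 1) u v + C y with hm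
      have hmsplit : m * 2 ^ (y + 1) = 2 ^ (y + 2) * (m / 2) + m % 2 * 2 ^ (y + 1) := by
        have hdm : 2 * (m / 2) + m % 2 = m := Nat.div_add_mod m 2
        calc m * 2 ^ (y + 1) = (2 * (m / 2) + m % 2) * 2 ^ (y + 1) := by rw [hdm]
          _ = 2 ^ (y + 2) * (m / 2) + m % 2 * 2 ^ (y + 1) := by ring
      have hm2le : m % 2 * 2 ^ (y + 1) ≤ 2 ^ (y + 1) := by
        have h1 : m % 2 ≤ 1 := by omega
        calc m % 2 * 2 ^ (y + 1) ≤ 1 * 2 ^ (y + 1) := Nat.mul_le_mul_right _ h1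
          _ = 2 ^ (y + 1) := one_mul _
      have h2P : (2:ℕ) ^ (y + 2) = 2 ^ (y + 1) * 2 := by ring
      have hmod2P : u * v % 2 ^ (y + 2)
          = u * v % 2 ^ (y + 1) + m % 2 * 2 ^ (y + 1) := by
        have h := prod_mod u v (y + 2)
        have hdec : (∑ k ∈ Finset.range (y + 2), Bitsum k k u v * 2 ^ k)
            = 2 ^ (y + 2) * (m / 2)
              + (u * v % 2 ^ (y + 1) + m % 2 * 2 ^ (y + 1)) := by
          rw [hS2]
          omega
        rw [h, hdec, Nat.mul_add_mod]
        apply Nat.mod_eq_of_lt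
        rw [h2P]
        omega
      have hbit : u * v / 2 ^ (y + 1) % 2 = m % 2 := by
        rw [← Nat.mod_mul_right_div_self (u * v) (2 ^ (y + 1)) 2, ← h2P, hmod2P,
          Nat.add_mul_div_right _ _ hPpos, Nat.div_eq_of_lt hrlt, Nat.zero_add]
      have hC : C (y + 1) = m / 2 := by rw [hm]; exact hCs y
      constructor
      · have e : (2:ℕ) ^ (y + 1 + 1) = 2 ^ (y + 2) := rfl
        rw [hS2, e, hC, hmod2P]
        have hmsplit' : m * 2 ^ (y + 1) = m / 2 * 2 ^ (y + 2) + m % 2 * 2 ^ (y + 1) := by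
          rw [hmsplit]; ring
        omega
      · right
        intro z hz
        have hzy : z = y := by omega
        subst hzy
        rw [hbit, hm]
  constructor
  · rw [Nat.testBit_eq_decide_div_mod_eq]
    simp only [pow_zero, Nat.div_one]
    rw [h01]
  · intro y
    rw [Nat.testBit_eq_decide_div_mod_eq]
    have h := (hinv (y + 1)).2
    rcases h with h | h
    · omega
    · rw [h y rfl]
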